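/- arXiv:math/0106023 — 3 statements merged into one kernel-verified Lean document; each statement's English description precedes it below -/
import Mathlib

section
/- Let E be an infinite-dimensional Banach space and let Σ be a countable set. Let τ be a mapping defined on the family 𝒢(E) of all infinite-dimensional closed subspaces of E with values in the powerset of Σ, which is increasing with respect to the quasi-order ≤ and inclusion, i.e. for all N, M ∈ 𝒢(E), if N ≤ M then τ(N) ⊆ τ(M). Then there exists a subspace M ∈ 𝒢(E) which is stabilizing for τ, i.e. τ(L) = τ(M) for every infinite-dimensional closed subspace L of M. -/
open Filter Topology

/-- Two sequences of vectors are `c`-equivalent: the natural map between their spans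
distorts norms of finite linear combinations by at most a factor `c`. -/
def SeqEquiv {E F : Type*} [NormedAddCommGroup E] [NormedSpace ℝ E]
    [NormedAddCommGroup F] [NormedSpace ℝ F]
    (c : ℝ) (x : ℕ → E) (y : ℕ → F) : Prop :=
  ∀ (s : Finset ℕ) (a : ℕ → ℝ),
    (1 / c) * ‖∑ i ∈ s, a i • x i‖ ≤ ‖∑ i ∈ s, a i • y i‖ ∧
    ‖∑ i ∈ s, a i • y i‖ ≤ c * ‖∑ i ∈ s, a i • x i‖

/-- A basic sequence: nonzero vectors whose partial-sum projections are uniformly bounded,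
i.e. a Schauder basis of its closed linear span. -/
def IsBasicSeq {E : Type*} [NormedAddCommGroup E] [NormedSpace ℝ E] (x : ℕ → E) : Prop :=
  (∀ n, x n ≠ 0) ∧
  ∃ K : ℝ, 1 ≤ K ∧ ∀ (a : ℕ → ℝ) (m n : ℕ), m ≤ n →
    ‖∑ i ∈ Finset.range m, a i • x i‖ ≤ K * ‖∑ i ∈ Finset.range n, a i • x i‖

/-- An unconditional basic sequence. -/
def IsUnconditionalSeq {E : Type*} [NormedAddCommGroup E] [NormedSpace ℝ E]
    (x : ℕ → E) : Prop :=
  IsBasicSeq x ∧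
  ∃ K : ℝ, 0 < K ∧ ∀ (s : Finset ℕ) (a ε : ℕ → ℝ), (∀ i, ε i = 1 ∨ ε i = -1) →
    ‖∑ i ∈ s, (ε i * a i) • x i‖ ≤ K * ‖∑ i ∈ s, a i • x i‖

/-- A `C`-subsymmetric sequence: an unconditional basic sequence that is `C`-equivalent
to each of its subsequences. -/
def IsSubsymmetric {E : Type*} [NormedAddCommGroup E] [NormedSpace ℝ E]
    (C : ℝ) (x : ℕ → E) : Prop :=
  IsUnconditionalSeq x ∧ ∀ φ : ℕ → ℕ, StrictMono φ → SeqEquiv C x (x ∘ φ)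

/-- A Schauder basis of `E`: biorthogonal system whose partial sums of the expansion of
every vector converge to that vector. -/
structure RealSchauderBasis (E : Type*) [NormedAddCommGroup E] [NormedSpace ℝ E] where
  e : ℕ → E
  coord : ℕ → E →L[ℝ] ℝ
  biorth : ∀ i j, coord i (e j) = if i = j then (1 : ℝ) else 0
  expand : ∀ x : E,
    Filter.Tendsto (fun n => ∑ i ∈ Finset.range n, coord i x • e i) atTop (𝓝 x)

/-- A block sequence with respect to a Schauder basis: nonzero, finitely supported
vectors with successive supports. -/
def IsBlockSeq {E : Type*} [NormedAddCommGroup E] [NormedSpace ℝ E]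
    (b : RealSchauderBasis E) (x : ℕ → E) : Prop :=
  (∀ n, x n ≠ 0) ∧
  (∀ n, (Function.support fun i => b.coord i (x n)).Finite) ∧
  ∀ m n, m < n → ∀ i ∈ Function.support (fun i => b.coord i (x m)),
    ∀ j ∈ Function.support (fun j => b.coord j (x n)), i < j

/-- A block subspace: the closed linear span of a block sequence. -/
def IsBlockSubspace {E : Type*} [NormedAddCommGroup E] [NormedSpace ℝ E]
    (b : RealSchauderBasis E) (M : Submodule ℝ E) : Prop :=
  ∃ x : ℕ → E, IsBlockSeq b x ∧ M = (Submodule.span ℝ (Set.range x)).topologicalClosure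

/-- An infinite-dimensional closed subspace. -/
def InfDimClosed {E : Type*} [NormedAddCommGroup E] [NormedSpace ℝ E]
    (M : Submodule ℝ E) : Prop :=
  IsClosed (M : Set E) ∧ ¬ FiniteDimensional ℝ M

/-- The quasi-order on subspaces: `L ≤ M` iff `L ⊆ M + F` for some finite-dimensional `F`. -/
def SubspaceLE {E : Type*} [NormedAddCommGroup E] [NormedSpace ℝ E]
    (L M : Submodule ℝ E) : Prop :=
  ∃ F : Submodule ℝ E, FiniteDimensional ℝ F ∧ L ≤ M ⊔ F

/-- The equivalence relation `≐` induced by the quasi-order `SubspaceLE`. -/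
def SubspaceEquiv {E : Type*} [NormedAddCommGroup E] [NormedSpace ℝ E]
    (L M : Submodule ℝ E) : Prop :=
  SubspaceLE L M ∧ SubspaceLE M L

/-- Two normed spaces are `c`-isomorphic: a linear isomorphism with
`(1/c)‖v‖ ≤ ‖Tv‖ ≤ c‖v‖`. -/
def IsoWithConst (c : ℝ) (X Y : Type*) [NormedAddCommGroup X] [NormedSpace ℝ X]
    [NormedAddCommGroup Y] [NormedSpace ℝ Y] : Prop :=
  ∃ T : X ≃ₗ[ℝ] Y, ∀ v : X, (1 / c) * ‖v‖ ≤ ‖T v‖ ∧ ‖T v‖ ≤ c * ‖v‖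

/-- A `c`-minimal Banach space: every infinite-dimensional closed subspace contains a
further infinite-dimensional closed subspace `c`-isomorphic to the whole space. -/
def CMinimalSpace (c : ℝ) (X : Type*) [NormedAddCommGroup X] [NormedSpace ℝ X] : Prop :=
  ∀ L : Submodule ℝ X, InfDimClosed L →
    ∃ N : Submodule ℝ X, N ≤ L ∧ InfDimClosed N ∧ IsoWithConst c ↥N X

/-- A minimal Banach space: every infinite-dimensional closed subspace contains a
further infinite-dimensional closed subspace isomorphic to the whole space. -/
def MinimalSpace (X : Type*) [NormedAddCommGroup X] [NormedSpace ℝ X] : Prop :=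
  ∀ L : Submodule ℝ X, InfDimClosed L →
    ∃ N : Submodule ℝ X, N ≤ L ∧ InfDimClosed N ∧ Nonempty (↥N ≃L[ℝ] X)
section Aux
variable {E : Type*} [NormedAddCommGroup E] [NormedSpace ℝ E]

lemma aux_isClosed_sup (M F : Submodule ℝ E) (hM : IsClosed (M : Set E))
    (hF : FiniteDimensional ℝ F) : IsClosed ((M ⊔ F : Submodule ℝ E) : Set E) := by
  haveI := hM
  haveI := hF
  have hcont : Continuous M.mkQ :=
    AddMonoidHomClass.continuous_of_bound M.mkQ 1
      (fun x => by simpa using Submodule.Quotient.norm_mk_le (S := M) x)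
  have heq : M ⊔ F = Submodule.comap M.mkQ (Submodule.map M.mkQ F) := by
    rw [Submodule.comap_map_eq, Submodule.ker_mkQ, sup_comm]
  rw [heq]
  exact (Submodule.closed_of_finiteDimensional (Submodule.map M.mkQ F)).preimage hcont

lemma aux_findim (L M F : Submodule ℝ E) (h : L ≤ M ⊔ F) (hF : FiniteDimensional ℝ F)
    (hLM : FiniteDimensional ℝ ↥(L ⊓ M)) : FiniteDimensional ℝ ↥L := by
  haveI := hF
  haveI := hLM
  set f : ↥L →ₗ[ℝ] E ⧸ M := M.mkQ.comp L.subtype with hf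
  have hker : LinearMap.ker f = Submodule.comap L.subtype (L ⊓ M) := by
    ext v
    simp [hf, Submodule.Quotient.mk_eq_zero, v.2]
  haveI hkerfd : FiniteDimensional ℝ (LinearMap.ker f) := by
    rw [hker]
    exact (Submodule.comapSubtypeEquivOfLe (inf_le_left : L ⊓ M ≤ L)).symm.finiteDimensional
  haveI hrangefd : FiniteDimensional ℝ (LinearMap.range f) := by
    have hle : LinearMap.range f ≤ Submodule.map M.mkQ F := by
      rintro y ⟨v, rfl⟩
      obtain ⟨a, ha, b, hb, hab⟩ := Submodule.mem_sup.mp (h v.2)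
      have : f v = M.mkQ b := by
        simp only [hf, LinearMap.comp_apply, Submodule.subtype_apply, ← hab, map_add]
        simp [Submodule.mkQ_apply, (Submodule.Quotient.mk_eq_zero M).mpr ha]
      rw [this]
      exact Submodule.mem_map_of_mem hb
    exact Submodule.finiteDimensional_of_le hle
  have hq := rank_quotient_add_rank_of_divisionRing (LinearMap.ker f)
  have h1 : Module.rank ℝ (↥L ⧸ LinearMap.ker f) < Cardinal.aleph0 := by
    rw [f.quotKerEquivRange.rank_eq]
    exact Module.rank_lt_aleph0_iff.mpr inferInstance
  have h2 : Module.rank ℝ (LinearMap.ker f) < Cardinal.aleph0 :=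
    Module.rank_lt_aleph0_iff.mpr inferInstance
  exact Module.rank_lt_aleph0_iff.mp (by rw [← hq]; exact Cardinal.add_lt_aleph0 h1 h2)

end Aux

/-- The stabilizing lemma for increasing maps on the family of all
infinite-dimensional closed subspaces of an infinite-dimensional Banach space. -/
theorem stabilizing_lemma_increasing
    {E : Type*} [NormedAddCommGroup E] [NormedSpace ℝ E] [CompleteSpace E]
    (hE : ¬ FiniteDimensional ℝ E)
    {σ : Type*} [Countable σ]
    (τ : Submodule ℝ E → Set σ)
    (hmono : ∀ N M : Submodule ℝ E, InfDimClosed N → InfDimClosed M →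
      SubspaceLE N M → τ N ⊆ τ M) :
    ∃ M : Submodule ℝ E, InfDimClosed M ∧
      ∀ L : Submodule ℝ E, InfDimClosed L → L ≤ M → τ L = τ M := by
  classical
  obtain ⟨g, hg⟩ := exists_injective_nat σ
  -- a "trivial" monotonicity helper: L ≤ M implies SubspaceLE L M
  have hstep : ∀ L M : Submodule ℝ E, L ≤ M → SubspaceLE L M := by
    intro L M hLM
    exact ⟨⊥, inferInstance, by simpa using hLM⟩
  -- the decreasing chain of subspaces
  let next : ℕ → Submodule ℝ E → Submodule ℝ E := fun n M =>
    if h : ∃ L, L ≤ M ∧ InfDimClosed L ∧ ∀ s, g s = n → s ∉ τ L then h.choose else M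
  let Mseq : ℕ → Submodule ℝ E := fun n => Nat.rec (motive := fun _ => Submodule ℝ E) ⊤ (fun n M => next n M) n
  have hMsucc : ∀ n, Mseq (n + 1) = next n (Mseq n) := fun n => rfl
  have htop : InfDimClosed (⊤ : Submodule ℝ E) := by
    refine ⟨by simp, fun h => hE ?_⟩
    exact (Submodule.topEquiv (R := ℝ) (M := E)).finiteDimensional
  have hnextspec : ∀ n M, InfDimClosed M → (next n M ≤ M ∧ InfDimClosed (next n M) ∧
      ((∃ L, L ≤ M ∧ InfDimClosed L ∧ ∀ s, g s = n → s ∉ τ L) →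
        ∀ s, g s = n → s ∉ τ (next n M))) := by
    intro n M hM
    simp only [next]
    split
    · next h => exact ⟨h.choose_spec.1, h.choose_spec.2.1, fun _ => h.choose_spec.2.2⟩
    · next h => exact ⟨le_rfl, hM, fun hex => absurd hex h⟩
  have hIDC : ∀ n, InfDimClosed (Mseq n) := by
    intro n
    induction n with
    | zero => exact htop
    | succ n ih =>
      rw [hMsucc]
      exact (hnextspec n (Mseq n) ih).2.1
  have hdec : ∀ n, Mseq (n + 1) ≤ Mseq n := by
    intro n
    rw [hMsucc]
    exact (hnextspec n (Mseq n) (hIDC n)).1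
  have hanti : ∀ m n, m ≤ n → Mseq n ≤ Mseq m := by
    intro m n h
    induction n with
    | zero => simp_all
    | succ n ih =>
      rcases Nat.lt_or_ge m (n + 1) with h' | h'
      · exact (hdec n).trans (ih (Nat.lt_succ_iff.mp h'))
      · have : m = n + 1 := le_antisymm h h'
        subst this; exact le_rfl
  have hstage : ∀ n, (∃ L, L ≤ Mseq n ∧ InfDimClosed L ∧ ∀ s, g s = n → s ∉ τ L) →
      ∀ s, g s = n → s ∉ τ (Mseq (n + 1)) := by
    intro n h
    rw [hMsucc]
    exact (hnextspec n (Mseq n) (hIDC n)).2.2 h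
  -- the diagonal subspace
  let pick : ℕ → Submodule ℝ E → E := fun n S =>
    if h : ∃ v, v ∈ Mseq n ∧ v ∉ S then h.choose else 0
  let Sseq : ℕ → Submodule ℝ E := fun n =>
    Nat.rec (motive := fun _ => Submodule ℝ E) ⊥ (fun n S => S ⊔ Submodule.span ℝ {pick n S}) n
  have hSsucc : ∀ n, Sseq (n + 1) = Sseq n ⊔ Submodule.span ℝ {pick n (Sseq n)} := fun n => rfl
  let x : ℕ → E := fun n => pick n (Sseq n)
  have hSfd : ∀ n, FiniteDimensional ℝ ↥(Sseq n) := by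
    intro n
    induction n with
    | zero =>
      show FiniteDimensional ℝ ↥(⊥ : Submodule ℝ E)
      exact inferInstance
    | succ n ih =>
      haveI := ih
      haveI : FiniteDimensional ℝ ↥(Submodule.span ℝ {pick n (Sseq n)}) :=
        inferInstance
      show FiniteDimensional ℝ ↥(Sseq n ⊔ Submodule.span ℝ {pick n (Sseq n)})
      exact Submodule.finiteDimensional_sup _ _
  have hx : ∀ n, x n ∈ Mseq n ∧ x n ∉ Sseq n := by
    intro n
    have hex : ∃ v, v ∈ Mseq n ∧ v ∉ Sseq n := by
      by_contra hc
      push_neg at hc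
      have hle : Mseq n ≤ Sseq n := fun v hv => hc v hv
      haveI := hSfd n
      exact (hIDC n).2 (Submodule.finiteDimensional_of_le hle)
    simp only [x, pick]
    split
    · next h => exact h.choose_spec
    · next h => exact absurd hex h
  have hxS : ∀ m n, m < n → x m ∈ Sseq n := by
    intro m n hmn
    have h1 : x m ∈ Sseq (m + 1) := by
      rw [hSsucc]
      exact Submodule.mem_sup_right (Submodule.mem_span_singleton_self _)
    have hmono' : ∀ k l, k ≤ l → Sseq k ≤ Sseq l := by
      intro k l hkl
      induction l with
      | zero => simp_all
      | succ l ih =>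
        rcases Nat.lt_or_ge k (l + 1) with h' | h'
        · refine (ih (Nat.lt_succ_iff.mp h')).trans ?_
          rw [hSsucc]; exact le_sup_left
        · have : k = l + 1 := le_antisymm hkl h'
          subst this; exact le_rfl
    exact hmono' (m + 1) n hmn h1
  have hrank : ∀ n, n ≤ Module.finrank ℝ ↥(Sseq n) := by
    intro n
    induction n with
    | zero => exact Nat.zero_le _
    | succ n ih =>
      have hlt : Sseq n < Sseq (n + 1) := by
        refine lt_of_le_of_ne ?_ ?_
        · rw [hSsucc]; exact le_sup_left
        · intro hEq
          exact (hx n).2 (hEq ▸ hxS n (n + 1) (Nat.lt_succ_self n))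
      haveI := hSfd (n + 1)
      have := Submodule.finrank_lt_finrank_of_lt hlt
      omega
  let Y : Submodule ℝ E := (Submodule.span ℝ (Set.range x)).topologicalClosure
  have hYclosed : IsClosed (Y : Set E) := Submodule.isClosed_topologicalClosure _
  have hYle : ∀ n, Y ≤ Mseq n ⊔ Sseq n := by
    intro n
    refine Submodule.topologicalClosure_minimal _ ?_
      (aux_isClosed_sup _ _ (hIDC n).1 (hSfd n))
    rw [Submodule.span_le]
    rintro _ ⟨i, rfl⟩
    rcases Nat.lt_or_ge i n with h' | h'
    · exact Submodule.mem_sup_right (hxS i n h')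
    · exact Submodule.mem_sup_left (hanti n i h' (hx i).1)
  have hSY : ∀ n, Sseq n ≤ Y := by
    intro n
    induction n with
    | zero => exact bot_le
    | succ n ih =>
      rw [hSsucc]
      refine sup_le ih ?_
      rw [Submodule.span_le, Set.singleton_subset_iff]
      exact (Submodule.span ℝ (Set.range x)).le_topologicalClosure
        (Submodule.subset_span ⟨n, rfl⟩)
  have hYinf : ¬ FiniteDimensional ℝ ↥Y := by
    intro hfd
    have hbound : ∀ n, n ≤ Module.finrank ℝ ↥Y := by
      intro n
      haveI := hfd
      exact (hrank n).trans (Submodule.finrank_mono (hSY n))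
    have := hbound (Module.finrank ℝ ↥Y + 1)
    omega
  have hYIDC : InfDimClosed Y := ⟨hYclosed, hYinf⟩
  refine ⟨Y, hYIDC, ?_⟩
  intro L hL hLY
  apply Set.Subset.antisymm
  · exact hmono L Y hL hYIDC (hstep L Y hLY)
  · intro s hs
    by_contra hsL
    set n := g s with hn
    have hLMn : L ≤ Mseq n ⊔ Sseq n := hLY.trans (hYle n)
    have hintclosed : IsClosed ((L ⊓ Mseq n : Submodule ℝ E) : Set E) := by
      rw [Submodule.coe_inf]
      exact hL.1.inter (hIDC n).1
    have hintIDC : InfDimClosed (L ⊓ Mseq n) := by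
      refine ⟨hintclosed, fun hfd => hL.2 ?_⟩
      exact aux_findim L (Mseq n) (Sseq n) hLMn (hSfd n) hfd
    have hex : ∃ L', L' ≤ Mseq n ∧ InfDimClosed L' ∧ ∀ s', g s' = n → s' ∉ τ L' := by
      refine ⟨L ⊓ Mseq n, inf_le_right, hintIDC, ?_⟩
      intro s' hs' hmem
      have : s' = s := hg (hs'.trans hn)
      subst this
      exact hsL (hmono (L ⊓ Mseq n) L hintIDC hL (hstep _ _ inf_le_left) hmem)
    have hnot := hstage n hex s rfl
    exact hnot (hmono Y (Mseq (n + 1)) hYIDC (hIDC (n + 1))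
      ⟨Sseq (n + 1), hSfd (n + 1), hYle (n + 1)⟩ hs)
end

section
/- Let E be an infinite-dimensional Banach space and let Σ be a countable set. Let τ be a mapping defined on the family 𝒢(E) of all infinite-dimensional closed subspaces of E with values in the powerset of Σ, which is decreasing with respect to the quasi-order ≤ and inclusion, i.e. for all N, M ∈ 𝒢(E), if N ≤ M then τ(N) ⊇ τ(M). Then there exists a subspace M ∈ 𝒢(E) which is stabilizing for τ, i.e. τ(L) = τ(M) for every infinite-dimensional closed subspace L of M. -/
open Filter Topology

section StabilizingAux

open Submodule

/-- The sup of a closed subspace and a finite-dimensional subspace is closed. -/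
lemma isClosed_sup_fd {E : Type*} [NormedAddCommGroup E] [NormedSpace ℝ E]
    [CompleteSpace E] {M F : Submodule ℝ E} (hM : IsClosed (M : Set E))
    (hF : FiniteDimensional ℝ F) :
    IsClosed ((M ⊔ F : Submodule ℝ E) : Set E) := by
  haveI := hM
  haveI := hF
  have hcont : Continuous M.mkQ :=
    AddMonoidHomClass.continuous_of_bound M.mkQ 1 fun x => by
      simpa using Submodule.Quotient.norm_mk_le M x
  haveI : FiniteDimensional ℝ (F.map M.mkQ) := Module.Finite.map F M.mkQ
  have h : (M ⊔ F : Submodule ℝ E) = (F.map M.mkQ).comap M.mkQ := by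
    rw [Submodule.comap_map_eq, Submodule.ker_mkQ, sup_comm]
  rw [h]
  exact (Submodule.closed_of_finiteDimensional (F.map M.mkQ)).preimage hcont

lemma exists_inf_sub {E : Type*} [NormedAddCommGroup E] [NormedSpace ℝ E]
    [CompleteSpace E] {L M' F : Submodule ℝ E}
    (hL : InfDimClosed L) (hM' : IsClosed (M' : Set E)) (hF : FiniteDimensional ℝ F)
    (hle : L ≤ M' ⊔ F) :
    ∃ N : Submodule ℝ E, N ≤ M' ∧ InfDimClosed N ∧
      ∃ F' : Submodule ℝ E, FiniteDimensional ℝ F' ∧ N ≤ L ⊔ F' := by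
  refine ⟨M' ⊓ (L ⊔ F), inf_le_left, ⟨?_, ?_⟩, F, hF, inf_le_right⟩
  · rw [Submodule.coe_inf]
    exact hM'.inter (isClosed_sup_fd hL.1 hF)
  · intro hfin
    have hLsub : L ≤ (M' ⊓ (L ⊔ F)) ⊔ F := by
      intro l hl
      obtain ⟨m, hm, f, hf, rfl⟩ := Submodule.mem_sup.1 (hle hl)
      have hmL : m ∈ L ⊔ F := by
        have hmf : m = (m + f) - f := by abel
        rw [hmf]
        exact sub_mem (Submodule.mem_sup_left hl) (Submodule.mem_sup_right hf)
      exact Submodule.add_mem_sup (Submodule.mem_inf.2 ⟨hm, hmL⟩) hf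
    haveI := hfin
    haveI := hF
    exact hL.2 (Submodule.finiteDimensional_of_le hLsub)

end StabilizingAux

/-- The stabilizing lemma for decreasing maps on the family of all
infinite-dimensional closed subspaces of an infinite-dimensional Banach space. -/
theorem stabilizing_lemma_decreasing
    {E : Type*} [NormedAddCommGroup E] [NormedSpace ℝ E] [CompleteSpace E]
    (hE : ¬ FiniteDimensional ℝ E)
    {σ : Type*} [Countable σ]
    (τ : Submodule ℝ E → Set σ)
    (hmono : ∀ N M : Submodule ℝ E, InfDimClosed N → InfDimClosed M →
      SubspaceLE N M → τ M ⊆ τ N) :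
    ∃ M : Submodule ℝ E, InfDimClosed M ∧
      ∀ L : Submodule ℝ E, InfDimClosed L → L ≤ M → τ L = τ M := by
  classical
  obtain ⟨g, hg⟩ := exists_surjective_nat (Option σ)
  -- the selection step
  have step : ∀ (W : Submodule ℝ E) (o : Option σ),
      ∃ N : Submodule ℝ E, N ≤ W ∧ (InfDimClosed W → InfDimClosed N) ∧
        ∀ s : σ, o = some s →
          (∃ N' : Submodule ℝ E, N' ≤ W ∧ InfDimClosed N' ∧ s ∈ τ N') → s ∈ τ N := by
    intro W o
    by_cases h : ∃ s : σ, o = some s ∧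
        ∃ N' : Submodule ℝ E, N' ≤ W ∧ InfDimClosed N' ∧ s ∈ τ N'
    · obtain ⟨s₀, ho, N', hN'W, hN'inf, hs₀⟩ := h
      refine ⟨N', hN'W, fun _ => hN'inf, ?_⟩
      intro s hs _
      rw [ho] at hs
      obtain rfl := Option.some.inj hs
      exact hs₀
    · exact ⟨W, le_rfl, id, fun s hs hex => absurd ⟨s, hs, hex⟩ h⟩
  choose next h1 h2 h3 using step
  -- the decreasing chain of subspaces
  let Ms : ℕ → Submodule ℝ E :=
    fun n => Nat.rec (motive := fun _ => Submodule ℝ E) ⊤ (fun k W => next W (g k)) n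
  have hMsS : ∀ n, Ms (n + 1) = next (Ms n) (g n) := fun n => rfl
  have htopinf : InfDimClosed (⊤ : Submodule ℝ E) := by
    refine ⟨by simp, fun h => hE ?_⟩
    haveI := h
    exact (Submodule.topEquiv (R := ℝ) (M := E)).finiteDimensional
  have hMinf : ∀ n, InfDimClosed (Ms n) := by
    intro n
    induction n with
    | zero => exact htopinf
    | succ k ih => rw [hMsS]; exact h2 (Ms k) (g k) ih
  have hanti : Antitone Ms := antitone_nat_of_succ_le fun n => by
    rw [hMsS]; exact h1 (Ms n) (g n)
  -- choosing vectors
  have pick0 : ∀ (S : Submodule ℝ E) (n : ℕ),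
      ∃ v : E, FiniteDimensional ℝ S → v ∈ Ms n ∧ v ∉ S := by
    intro S n
    by_cases hS : FiniteDimensional ℝ S
    · have hex : ∃ v, v ∈ Ms n ∧ v ∉ S := by
        by_contra hcon
        push_neg at hcon
        haveI := hS
        exact (hMinf n).2 (Submodule.finiteDimensional_of_le fun v hv => hcon v hv)
      obtain ⟨v, hv⟩ := hex
      exact ⟨v, fun _ => hv⟩
    · exact ⟨0, fun h => absurd h hS⟩
  choose pick hpick using pick0
  let Sn : ℕ → Submodule ℝ E :=
    fun n => Nat.rec (motive := fun _ => Submodule ℝ E) ⊥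
      (fun k W => W ⊔ Submodule.span ℝ {pick W k}) n
  let x : ℕ → E := fun n => pick (Sn n) n
  have hSn0 : Sn 0 = ⊥ := rfl
  have hSnS : ∀ n, Sn (n + 1) = Sn n ⊔ Submodule.span ℝ {x n} := fun n => rfl
  have hSfin : ∀ n, FiniteDimensional ℝ (Sn n) := by
    intro n
    induction n with
    | zero => rw [hSn0]; infer_instance
    | succ k ih => rw [hSnS]; haveI := ih; infer_instance
  have hx : ∀ n, x n ∈ Ms n ∧ x n ∉ Sn n := fun n => hpick (Sn n) n (hSfin n)
  have hSmono : Monotone Sn := monotone_nat_of_le_succ fun n => by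
    rw [hSnS]; exact le_sup_left
  have hxSn : ∀ n, x n ∈ Sn (n + 1) := fun n => by
    rw [hSnS]
    exact Submodule.mem_sup_right (Submodule.mem_span_singleton_self _)
  -- the diagonal subspace
  set M : Submodule ℝ E := (Submodule.span ℝ (Set.range x)).topologicalClosure with hMdef
  have hSnle : ∀ n, Sn n ≤ Submodule.span ℝ (Set.range x) := by
    intro n
    induction n with
    | zero => rw [hSn0]; exact bot_le
    | succ k ih =>
      rw [hSnS]
      refine sup_le ih (Submodule.span_mono ?_)
      exact Set.singleton_subset_iff.2 ⟨k, rfl⟩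
  have hMinfdim : ¬ FiniteDimensional ℝ M := by
    intro hfin
    haveI := hfin
    have hle : ∀ n, Sn n ≤ M :=
      fun n => le_trans (hSnle n) (Submodule.le_topologicalClosure _)
    have hrank : ∀ n, n ≤ Module.finrank ℝ (Sn n) := by
      intro n
      induction n with
      | zero => exact Nat.zero_le _
      | succ k ih =>
        have hlt : Sn k < Sn (k + 1) :=
          SetLike.lt_iff_le_and_exists.2
            ⟨hSmono (Nat.le_succ k), x k, hxSn k, (hx k).2⟩
        haveI := hSfin (k + 1)
        have := Submodule.finrank_lt_finrank_of_lt hlt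
        omega
    have hub : ∀ n, Module.finrank ℝ (Sn n) ≤ Module.finrank ℝ M :=
      fun n => Submodule.finrank_mono (hle n)
    have h1' := hrank (Module.finrank ℝ M + 1)
    have h2' := hub (Module.finrank ℝ M + 1)
    omega
  have hMIDC : InfDimClosed M :=
    ⟨Submodule.isClosed_topologicalClosure _, hMinfdim⟩
  have hdiagle : ∀ n, M ≤ Ms n ⊔ Sn n := by
    intro n
    apply Submodule.topologicalClosure_minimal
    · apply Submodule.span_le.2
      rintro v ⟨k, rfl⟩
      rcases le_or_gt n k with h | h
      · exact Submodule.mem_sup_left (hanti h (hx k).1)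
      · exact Submodule.mem_sup_right (hSmono h (hxSn k))
    · exact isClosed_sup_fd (hMinf n).1 (hSfin n)
  refine ⟨M, hMIDC, fun L hL hLM => ?_⟩
  apply Set.Subset.antisymm
  · -- τ L ⊆ τ M
    intro s hs
    obtain ⟨n, hn⟩ := hg (some s)
    have hLn : L ≤ Ms n ⊔ Sn n := le_trans hLM (hdiagle n)
    have hNex : ∃ N' : Submodule ℝ E, N' ≤ Ms n ∧ InfDimClosed N' ∧ s ∈ τ N' := by
      obtain ⟨N, hN1, hN2, F', hF', hNF'⟩ :=
        exists_inf_sub hL (hMinf n).1 (hSfin n) hLn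
      exact ⟨N, hN1, hN2, hmono N L hN2 hL ⟨F', hF', hNF'⟩ hs⟩
    have hsnext : s ∈ τ (next (Ms n) (g n)) := h3 (Ms n) (g n) s hn hNex
    rw [← hMsS n] at hsnext
    exact hmono M (Ms (n + 1)) hMIDC (hMinf (n + 1))
      ⟨Sn (n + 1), hSfin (n + 1), hdiagle (n + 1)⟩ hsnext
  · exact hmono L M hL hMIDC ⟨(⊥ : Submodule ℝ E), Module.Finite.bot ℝ E, le_trans hLM le_sup_left⟩
end

section
/- Let E be a Banach space with a Schauder basis {e_i}, with biorthogonal functionals {e*_i}. Let {x_n} ⊂ E be a seminormalized basic sequence satisfying lim_{n→∞} e*_i(x_n) = 0 for every i ∈ ℕ. Then for any ε > 0 there is a block sequence {y_n} (with respect to {e_i}) which is (1+ε)-equivalent to some subsequence of {x_n}. -/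
open Filter Topology

/-- A seminormalized basic sequence whose basis coordinates tend to zero
has, for every `ε > 0`, a subsequence `(1+ε)`-equivalent to a block sequence. -/
theorem block_perturbation
    {E : Type*} [NormedAddCommGroup E] [NormedSpace ℝ E] [CompleteSpace E]
    (b : RealSchauderBasis E)
    (x : ℕ → E) (hbasic : IsBasicSeq x)
    (hsemi : ∃ m M : ℝ, 0 < m ∧ (∀ n, m ≤ ‖x n‖) ∧ (∀ n, ‖x n‖ ≤ M))
    (hcoord : ∀ i : ℕ, Filter.Tendsto (fun n => b.coord i (x n)) Filter.atTop (nhds 0))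
    (ε : ℝ) (hε : 0 < ε) :
    ∃ (k : ℕ → ℕ) (y : ℕ → E), StrictMono k ∧ IsBlockSeq b y ∧
      SeqEquiv (1 + ε) (x ∘ k) y := by
  classical
  obtain ⟨hx0, K, hK1, hKb⟩ := hbasic
  obtain ⟨m, M, hm, hmx, _⟩ := hsemi
  have hε1 : (0:ℝ) < 1 + ε := by linarith
  have hKpos : (0:ℝ) < K := lt_of_lt_of_le one_pos hK1
  set δ : ℝ := ε * m / (2 * K * (1 + ε)) with hδdef
  have hδpos : 0 < δ := by positivity
  have hδm : 2 * K * δ / m = ε / (1 + ε) := by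
    rw [hδdef]; field_simp
  have hδle : δ ≤ m / 2 := by
    rw [hδdef, div_le_div_iff₀ (by positivity) (by norm_num)]
    nlinarith [mul_nonneg hm.le (mul_nonneg (sub_nonneg.mpr hK1) hε1.le)]
  -- coordinates of finite combinations of basis vectors
  have hcs : ∀ (t : Finset ℕ) (c : ℕ → ℝ) (j : ℕ),
      b.coord j (∑ i ∈ t, c i • b.e i) = if j ∈ t then c j else 0 := by
    intro t c j
    rw [map_sum]
    simp only [map_smul, smul_eq_mul, b.biorth, mul_ite, mul_one, mul_zero]
    simp [Finset.sum_ite_eq' t j c, eq_comm]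
  set P : ℕ → E → E := fun n v => ∑ i ∈ Finset.range n, b.coord i v • b.e i with hPdef
  -- step existence
  have hstep : ∀ (k₀ p n : ℕ), ∃ kq : ℕ × ℕ,
      k₀ < kq.1 ∧ p < kq.2 ∧ ‖P p (x kq.1)‖ < δ / 2 ^ (n + 1) / 2 ∧
      ‖x kq.1 - P kq.2 (x kq.1)‖ < δ / 2 ^ (n + 1) / 2 := by
    intro k₀ p n
    have hδn : 0 < δ / 2 ^ (n + 1) / 2 := by positivity
    have h1 : Filter.Tendsto (fun l => P p (x l)) Filter.atTop (𝓝 0) := by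
      have h := tendsto_finset_sum (Finset.range p)
        (fun i _ => (hcoord i).smul_const (b.e i))
      simpa using h
    obtain ⟨N, hN⟩ := (Metric.tendsto_atTop.mp h1) _ hδn
    set k1 := max (k₀ + 1) N with hk1
    have hk1N : N ≤ k1 := le_max_right _ _
    have hPp : ‖P p (x k1)‖ < δ / 2 ^ (n + 1) / 2 := by
      have := hN k1 hk1N
      rwa [dist_zero_right] at this
    obtain ⟨N', hN'⟩ := (Metric.tendsto_atTop.mp (b.expand (x k1))) _ hδn
    refine ⟨(k1, max (p + 1) N'), lt_of_lt_of_le (Nat.lt_succ_self _) (le_max_left _ _),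
      lt_of_lt_of_le (Nat.lt_succ_self _) (le_max_left _ _), hPp, ?_⟩
    have := hN' (max (p + 1) N') (le_max_right _ _)
    rw [dist_eq_norm, ← norm_neg] at this
    simpa [neg_sub] using this
  choose f hf1 hf2 hf3 hf4 using hstep
  set F : ℕ → ℕ × ℕ × ℕ := fun n => Nat.rec (motive := fun _ => ℕ × ℕ × ℕ)
      ((f 0 0 0).1, 0, (f 0 0 0).2)
      (fun n prev => ((f prev.1 prev.2.2 (n + 1)).1, prev.2.2, (f prev.1 prev.2.2 (n + 1)).2)) n
    with hF
  set k : ℕ → ℕ := fun n => (F n).1 with hk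
  set p : ℕ → ℕ := fun n => (F n).2.1 with hp
  set q : ℕ → ℕ := fun n => (F n).2.2 with hq
  have hrec : ∀ n, (k (n+1), p (n+1), q (n+1)) =
      ((f (k n) (q n) (n + 1)).1, q n, (f (k n) (q n) (n + 1)).2) := fun n => rfl
  have hp0 : p 0 = 0 := rfl
  have hk0 : k 0 = (f 0 0 0).1 := rfl
  have hq0 : q 0 = (f 0 0 0).2 := rfl
  have hqp : ∀ n, q n = p (n + 1) := fun n => rfl
  have hksucc : ∀ n, k n < k (n + 1) := fun n => hf1 (k n) (q n) (n + 1)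
  have hpq : ∀ n, p n < q n := by
    intro n
    cases n with
    | zero => exact hf2 0 0 0
    | succ n => exact hf2 (k n) (q n) (n + 1)
  have hnear1 : ∀ n, ‖P (p n) (x (k n))‖ < δ / 2 ^ (n + 1) / 2 := by
    intro n
    cases n with
    | zero => exact hf3 0 0 0
    | succ n => exact hf3 (k n) (q n) (n + 1)
  have hnear2 : ∀ n, ‖x (k n) - P (q n) (x (k n))‖ < δ / 2 ^ (n + 1) / 2 := by
    intro n
    cases n with
    | zero => exact hf4 0 0 0
    | succ n => exact hf4 (k n) (q n) (n + 1)
  have hksm : StrictMono k := strictMono_nat_of_lt_succ hksucc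
  have hpsm : StrictMono p := strictMono_nat_of_lt_succ (fun n => by rw [← hqp]; exact hpq n)
  set y : ℕ → E := fun n => ∑ i ∈ Finset.Ico (p n) (q n), b.coord i (x (k n)) • b.e i with hy
  have hyP : ∀ n, y n = P (q n) (x (k n)) - P (p n) (x (k n)) := by
    intro n
    exact Finset.sum_Ico_eq_sub _ (le_of_lt (hpq n))
  have hnear : ∀ n, ‖x (k n) - y n‖ < δ / 2 ^ (n + 1) := by
    intro n
    rw [hyP]
    have heq : x (k n) - (P (q n) (x (k n)) - P (p n) (x (k n))) =
        (x (k n) - P (q n) (x (k n))) + P (p n) (x (k n)) := by abel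
    rw [heq]
    calc ‖_ + _‖ ≤ ‖x (k n) - P (q n) (x (k n))‖ + ‖P (p n) (x (k n))‖ := norm_add_le _ _
      _ < δ / 2 ^ (n + 1) / 2 + δ / 2 ^ (n + 1) / 2 := add_lt_add (hnear2 n) (hnear1 n)
      _ = δ / 2 ^ (n + 1) := by ring
  have hδn_le : ∀ n : ℕ, δ / 2 ^ (n + 1) ≤ δ / 2 := by
    intro n
    rw [div_le_div_iff₀ (by positivity) (by norm_num)]
    have h2 : (2:ℝ) ≤ 2 ^ (n + 1) := le_self_pow₀ one_le_two (Nat.succ_ne_zero n)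
    exact mul_le_mul_of_nonneg_left h2 hδpos.le
  have hy_norm : ∀ n, m / 2 ≤ ‖y n‖ := by
    intro n
    have h1 := hnear n
    have h2 := hδn_le n
    have h3 := hmx (k n)
    have h4 : ‖x (k n)‖ - ‖y n‖ ≤ ‖x (k n) - y n‖ := norm_sub_norm_le _ _
    linarith
  have hy0 : ∀ n, y n ≠ 0 := by
    intro n h
    have := hy_norm n
    rw [h, norm_zero] at this
    linarith
  have hsupp : ∀ n j, b.coord j (y n) ≠ 0 → j ∈ Finset.Ico (p n) (q n) := by
    intro n j h
    by_contra hj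
    apply h
    rw [hy, hcs, if_neg hj]
  refine ⟨k, y, hksm, ⟨hy0, ?_, ?_⟩, ?_⟩
  · intro n
    exact Set.Finite.subset (Finset.Ico (p n) (q n)).finite_toSet
      (fun j hj => hsupp n j hj)
  · intro a a' haa' i hi j hj
    have hi' := Finset.mem_Ico.mp (hsupp a i hi)
    have hj' := Finset.mem_Ico.mp (hsupp a' j hj)
    have : q a ≤ p a' := by
      rw [hqp a]
      exact hpsm.monotone haa'
    omega
  · -- SeqEquiv
    intro s a
    set X := ∑ i ∈ s, a i • (x ∘ k) i with hX
    set Y := ∑ i ∈ s, a i • y i with hY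
    have hXnn : (0:ℝ) ≤ ‖X‖ := norm_nonneg _
    have hcoef : ∀ i ∈ s, |a i| * m ≤ 2 * K * ‖X‖ := by
      intro i hi
      set c : ℕ → ℝ := fun j => if h : ∃ i' ∈ s, k i' = j then a h.choose else 0 with hc
      have hck : ∀ i' ∈ s, c (k i') = a i' := by
        intro i' hi'
        have hex : ∃ i'' ∈ s, k i'' = k i' := ⟨i', hi', rfl⟩
        show (if h : ∃ i'' ∈ s, k i'' = k i' then a h.choose else 0) = a i'
        rw [dif_pos hex]
        exact congrArg a (hksm.injective hex.choose_spec.2)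
      set N := s.sup k + 1 with hN
      have hkN : ∀ i' ∈ s, k i' < N := fun i' h => Nat.lt_succ_of_le (Finset.le_sup h)
      have himage : s.image k ⊆ Finset.range N := by
        intro j hj
        obtain ⟨i', hi', rfl⟩ := Finset.mem_image.mp hj
        exact Finset.mem_range.mpr (hkN i' hi')
      have hzero : ∀ j ∈ Finset.range N, j ∉ s.image k → c j • x j = 0 := by
        intro j _ hj
        show (if h : ∃ i' ∈ s, k i' = j then a h.choose else 0) • x j = 0
        have : ¬ ∃ i' ∈ s, k i' = j := by
          rintro ⟨i', hi', rfl⟩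
          exact hj (Finset.mem_image_of_mem k hi')
        rw [dif_neg this, zero_smul]
      have hXc : ∑ j ∈ Finset.range N, c j • x j = X := by
        rw [← Finset.sum_subset himage hzero,
          Finset.sum_image (fun a ha b hb h => hksm.injective h)]
        exact Finset.sum_congr rfl (fun i' hi' => by rw [hck i' hi']; rfl)
      have h1 : ‖∑ j ∈ Finset.range (k i + 1), c j • x j‖ ≤ K * ‖X‖ := by
        rw [← hXc]
        exact hKb c (k i + 1) N (hkN i hi)
      have h2 : ‖∑ j ∈ Finset.range (k i), c j • x j‖ ≤ K * ‖X‖ := by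
        rw [← hXc]
        exact hKb c (k i) N (le_of_lt (hkN i hi))
      have h3 : ‖c (k i) • x (k i)‖ ≤ 2 * K * ‖X‖ := by
        have heq : c (k i) • x (k i) =
            (∑ j ∈ Finset.range (k i + 1), c j • x j) - ∑ j ∈ Finset.range (k i), c j • x j := by
          rw [Finset.sum_range_succ]; abel
        rw [heq]
        calc ‖_ - _‖ ≤ ‖∑ j ∈ Finset.range (k i + 1), c j • x j‖ +
            ‖∑ j ∈ Finset.range (k i), c j • x j‖ := norm_sub_le _ _
          _ ≤ K * ‖X‖ + K * ‖X‖ := add_le_add h1 h2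
          _ = 2 * K * ‖X‖ := by ring
      rw [hck i hi, norm_smul, Real.norm_eq_abs] at h3
      nlinarith [hmx (k i), abs_nonneg (a i)]
    have hsum : ∑ i ∈ s, δ / 2 ^ (i + 1) ≤ δ := by
      have hterm : ∀ i : ℕ, δ / 2 ^ (i + 1) = (δ / 2) * (1 / 2) ^ i := by
        intro i
        rw [pow_succ]
        rw [div_eq_mul_inv, div_eq_mul_inv, mul_inv, one_div, inv_pow]
        ring
      calc ∑ i ∈ s, δ / 2 ^ (i + 1)
          ≤ ∑ i ∈ Finset.range (s.sup id + 1), δ / 2 ^ (i + 1) :=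
            Finset.sum_le_sum_of_subset_of_nonneg
              (fun i hi => Finset.mem_range.mpr (Nat.lt_succ_of_le (Finset.le_sup (f := id) hi)))
              (fun i _ _ => by positivity)
        _ = (δ / 2) * ∑ i ∈ Finset.range (s.sup id + 1), ((1:ℝ) / 2) ^ i := by
            rw [Finset.mul_sum]
            exact Finset.sum_congr rfl (fun i _ => hterm i)
        _ ≤ (δ / 2) * 2 := by
            have := sum_geometric_two_le (s.sup id + 1)
            nlinarith [hδpos]
        _ = δ := by ring
    have hpert : ‖Y - X‖ ≤ (ε / (1 + ε)) * ‖X‖ := by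
      have h1 : Y - X = ∑ i ∈ s, a i • (y i - x (k i)) := by
        rw [hY, hX, ← Finset.sum_sub_distrib]
        exact Finset.sum_congr rfl (fun i _ => by rw [smul_sub]; rfl)
      calc ‖Y - X‖ = ‖∑ i ∈ s, a i • (y i - x (k i))‖ := by rw [h1]
        _ ≤ ∑ i ∈ s, ‖a i • (y i - x (k i))‖ := norm_sum_le _ _
        _ = ∑ i ∈ s, |a i| * ‖y i - x (k i)‖ := by
            exact Finset.sum_congr rfl (fun i _ => by rw [norm_smul, Real.norm_eq_abs])
        _ ≤ ∑ i ∈ s, (2 * K * ‖X‖ / m) * (δ / 2 ^ (i + 1)) := by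
            refine Finset.sum_le_sum (fun i hi => ?_)
            have ha : |a i| ≤ 2 * K * ‖X‖ / m := by
              rw [le_div_iff₀ hm]
              exact hcoef i hi
            have hb : ‖y i - x (k i)‖ ≤ δ / 2 ^ (i + 1) := by
              rw [norm_sub_rev]
              exact (hnear i).le
            exact mul_le_mul ha hb (norm_nonneg _) (by positivity)
        _ = (2 * K * ‖X‖ / m) * ∑ i ∈ s, δ / 2 ^ (i + 1) := by rw [← Finset.mul_sum]
        _ ≤ (2 * K * ‖X‖ / m) * δ := by
            have hfac : (0:ℝ) ≤ 2 * K * ‖X‖ / m := by positivity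
            exact mul_le_mul_of_nonneg_left hsum hfac
        _ = (ε / (1 + ε)) * ‖X‖ := by
            rw [← hδm]
            field_simp
    have hYle : ‖Y‖ ≤ ‖X‖ + (ε / (1 + ε)) * ‖X‖ := by
      have : Y = X + (Y - X) := by abel
      calc ‖Y‖ = ‖X + (Y - X)‖ := by rw [← this]
        _ ≤ ‖X‖ + ‖Y - X‖ := norm_add_le _ _
        _ ≤ ‖X‖ + (ε / (1 + ε)) * ‖X‖ := by linarith
    have hYge : ‖X‖ - (ε / (1 + ε)) * ‖X‖ ≤ ‖Y‖ := by
      have h := norm_sub_norm_le X Y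
      rw [norm_sub_rev] at h
      linarith
    have hfrac : ε / (1 + ε) ≤ ε := div_le_self hε.le (by linarith)
    have hfrac2 : (ε / (1 + ε)) * ‖X‖ ≤ ε * ‖X‖ := mul_le_mul_of_nonneg_right hfrac hXnn
    constructor
    · -- lower bound
      have key : (1 / (1 + ε)) * ‖X‖ = ‖X‖ - (ε / (1 + ε)) * ‖X‖ := by
        field_simp
        ring
      rw [key]
      exact hYge
    · -- upper bound
      have : (1 + ε) * ‖X‖ = ‖X‖ + ε * ‖X‖ := by ring
      rw [this]
      linarith
end
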